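/- Fix a natural number k ≥ 1 and let T : SO(3) → (ℝ³)^{⊗k} be a continuous map, with components T_{i₁...i_k}(R), satisfying T_{i₁...i_k}(R R') = T_{i₁...i_k}(R) + R_{i₁ j₁} ⋯ R_{i_k j_k} T_{j₁...j_k}(R') for all R, R' ∈ SO(3). Then there exist constants c_{j₁...j_k} ∈ ℝ such that T_{i₁...i_k}(R) = (R_{i₁ j₁} ⋯ R_{i_k j_k} − δ_{i₁ j₁} ⋯ δ_{i_k j_k}) c_{j₁...j_k} for all R ∈ SO(3). -/

import Mathlib

/-- `SO(3)`: real orthogonal `3×3` matrices of determinant `1`. -/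
def SO3 : Set (Matrix (Fin 3) (Fin 3) ℝ) :=
  {R | R * R.transpose = 1 ∧ R.det = 1}

namespace SO3Aux

open MeasureTheory

abbrev M3 := Matrix (Fin 3) (Fin 3) ℝ

lemma one_mem : (1 : M3) ∈ SO3 := by
  constructor <;> simp [SO3]

lemma mul_mem {A B : M3} (hA : A ∈ SO3) (hB : B ∈ SO3) : A * B ∈ SO3 := by
  obtain ⟨hA1, hA2⟩ := hA
  obtain ⟨hB1, hB2⟩ := hB
  constructor
  · rw [Matrix.transpose_mul]
    calc A * B * (B.transpose * A.transpose)
        = A * (B * B.transpose) * A.transpose := by simp only [mul_assoc]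
      _ = 1 := by rw [hB1, mul_one, hA1]
  · rw [Matrix.det_mul, hA2, hB2, one_mul]

lemma transpose_mem {A : M3} (hA : A ∈ SO3) : A.transpose ∈ SO3 := by
  obtain ⟨hA1, hA2⟩ := hA
  constructor
  · rw [Matrix.transpose_transpose]
    exact mul_eq_one_comm.mp hA1
  · rw [Matrix.det_transpose]; exact hA2

/-- SO(3) as a type. -/
def G : Type := {R : M3 // R ∈ SO3}

instance : Group G where
  mul A B := ⟨A.1 * B.1, mul_mem A.2 B.2⟩
  one := ⟨1, one_mem⟩
  inv A := ⟨A.1.transpose, transpose_mem A.2⟩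
  mul_assoc A B C := Subtype.ext (mul_assoc A.1 B.1 C.1)
  one_mul A := Subtype.ext (one_mul A.1)
  mul_one A := Subtype.ext (mul_one A.1)
  inv_mul_cancel A := Subtype.ext (mul_eq_one_comm.mp A.2.1)

@[simp] lemma mul_val (A B : G) : (A * B).1 = A.1 * B.1 := rfl

instance : TopologicalSpace G := instTopologicalSpaceSubtype

lemma continuous_val : Continuous (fun g : G => g.1) := continuous_subtype_val

instance : T2Space G := inferInstanceAs (T2Space {R : M3 // R ∈ SO3})

instance : IsTopologicalGroup G where
  continuous_mul := by
    apply Continuous.subtype_mk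
    exact (continuous_val.comp continuous_fst).matrix_mul
      (continuous_val.comp continuous_snd)
  continuous_inv := by
    apply Continuous.subtype_mk
    exact continuous_val.matrix_transpose

lemma isClosed_SO3 : IsClosed SO3 := by
  have h1 : IsClosed {R : M3 | R * R.transpose = 1} :=
    isClosed_eq (continuous_id.matrix_mul continuous_id.matrix_transpose)
      continuous_const
  have h2 : IsClosed {R : M3 | R.det = 1} :=
    isClosed_eq continuous_id.matrix_det continuous_const
  exact h1.inter h2

lemma entry_bound {R : M3} (hR : R ∈ SO3) (i j : Fin 3) : R i j ∈ Set.Icc (-1 : ℝ) 1 := by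
  have hmem : R ∈ Matrix.unitaryGroup (Fin 3) ℝ := by
    rw [Matrix.mem_unitaryGroup_iff]
    have hstar : star R = R.transpose := by
      rw [Matrix.star_eq_conjTranspose, Matrix.conjTranspose_eq_transpose_of_trivial]
    rw [hstar]; exact hR.1
  have := entry_norm_bound_of_unitary hmem i j
  rw [Real.norm_eq_abs, abs_le] at this
  exact ⟨this.1, this.2⟩

lemma isCompact_SO3 : IsCompact SO3 := by
  have hK : IsCompact (Set.univ.pi fun _ : Fin 3 =>
      Set.univ.pi fun _ : Fin 3 => Set.Icc (-1 : ℝ) 1) :=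
    isCompact_univ_pi fun _ => isCompact_univ_pi fun _ => isCompact_Icc
  refine hK.of_isClosed_subset isClosed_SO3 ?_
  intro R hR
  intro i _ 
  intro j _
  exact entry_bound hR i j

instance : CompactSpace G := isCompact_iff_compactSpace.mp isCompact_SO3

instance : MeasurableSpace G := borel G
instance : BorelSpace G := ⟨rfl⟩

noncomputable def μ : Measure G := Measure.haar

instance : μ.IsHaarMeasure := by unfold μ; infer_instance
instance : μ.IsMulLeftInvariant := by unfold μ; infer_instance
instance : IsFiniteMeasure μ := by unfold μ; infer_instance

lemma measure_univ_pos : 0 < (μ Set.univ).toReal := by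
  have h1 : μ Set.univ ≠ 0 := by
    have : (Set.univ : Set G).Nonempty := ⟨(1 : G), trivial⟩
    exact (isOpen_univ.measure_ne_zero μ this)
  have h2 : μ Set.univ ≠ ⊤ := measure_ne_top μ _
  exact ENNReal.toReal_pos h1 h2

end SO3Aux

/-- Let `k ≥ 1` and let `T : SO(3) → (ℝ³)^{⊗k}` be continuous, with components
`T_{i₁…i_k}(R)` (a tensor of rank `k` being a family of reals indexed by
`Fin k → Fin 3`), satisfying the cocycle condition
`T_{i₁…i_k}(R R') = T_{i₁…i_k}(R) + R_{i₁j₁} ⋯ R_{i_kj_k} T_{j₁…j_k}(R')`.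
Then there are constants `c_{j₁…j_k}` with
`T_{i₁…i_k}(R) = (R_{i₁j₁} ⋯ R_{i_kj_k} − δ_{i₁j₁} ⋯ δ_{i_kj_k}) c_{j₁…j_k}`. -/
theorem SO3_tensor_cocycle_is_coboundary (k : ℕ) (hk : 1 ≤ k)
    (T : Matrix (Fin 3) (Fin 3) ℝ → (Fin k → Fin 3) → ℝ)
    (hTcont : ContinuousOn T SO3)
    (hcoc : ∀ R ∈ SO3, ∀ R' ∈ SO3, ∀ idx : Fin k → Fin 3,
      T (R * R') idx =
        T R idx + ∑ jdx : Fin k → Fin 3, (∏ s, R (idx s) (jdx s)) * T R' jdx) :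
    ∃ c : (Fin k → Fin 3) → ℝ, ∀ R ∈ SO3, ∀ idx : Fin k → Fin 3,
      T R idx = (∑ jdx : Fin k → Fin 3, (∏ s, R (idx s) (jdx s)) * c jdx) - c idx := by
  classical
  open MeasureTheory SO3Aux in
  -- the component functions on the group G
  have hf_cont : ∀ idx : Fin k → Fin 3, Continuous (fun g : G => T g.1 idx) := by
    intro idx
    have h1 : Continuous (SO3.restrict T) := hTcont.restrict
    exact (continuous_apply idx).comp h1
  have hf_int : ∀ idx : Fin k → Fin 3, Integrable (fun g : G => T g.1 idx) μ := by
    intro idx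
    exact (hf_cont idx).integrable_of_hasCompactSupport
      (HasCompactSupport.of_compactSpace _)
  set m : ℝ := (μ Set.univ).toReal with hm_def
  have hm : 0 < m := measure_univ_pos
  set I : (Fin k → Fin 3) → ℝ := fun idx => ∫ g : G, T g.1 idx ∂μ with hI_def
  refine ⟨fun idx => -(I idx) / m, ?_⟩
  intro R hR idx
  set g : G := ⟨R, hR⟩ with hg_def
  -- key identity: I idx = m * T R idx + ∑ jdx, (∏ s, R ..) * I jdx
  have key : I idx = m * T R idx + ∑ jdx : Fin k → Fin 3,
      (∏ s, R (idx s) (jdx s)) * I jdx := by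
    have h1 : (∫ x : G, T ((g * x).1) idx ∂μ) = I idx := by
      exact integral_mul_left_eq_self (fun x : G => T x.1 idx) g
    have h2 : ∀ x : G, T ((g * x).1) idx =
        T R idx + ∑ jdx : Fin k → Fin 3, (∏ s, R (idx s) (jdx s)) * T x.1 jdx := by
      intro x
      exact hcoc R hR x.1 x.2 idx
    rw [← h1]
    have h3 : (∫ x : G, T ((g * x).1) idx ∂μ) =
        (∫ x : G, (T R idx + ∑ jdx : Fin k → Fin 3,
          (∏ s, R (idx s) (jdx s)) * T x.1 jdx) ∂μ) := by
      congr 1; funext x; exact h2 x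
    rw [h3]
    rw [integral_add (integrable_const _)
      (integrable_finset_sum _ fun jdx _ => (hf_int jdx).const_mul _)]
    rw [integral_const, integral_finset_sum _ fun jdx _ => (hf_int jdx).const_mul _]
    simp only [integral_const, smul_eq_mul, MeasureTheory.integral_const_mul, MeasureTheory.measureReal_def, hm_def, hI_def]
  -- now conclude
  have hsum : (∑ jdx : Fin k → Fin 3, (∏ s, R (idx s) (jdx s)) * (-(I jdx) / m))
      = (-(1/m)) * ∑ jdx : Fin k → Fin 3, (∏ s, R (idx s) (jdx s)) * I jdx := by
    rw [Finset.mul_sum]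
    congr 1; funext jdx; ring
  rw [hsum]
  have : ∑ jdx : Fin k → Fin 3, (∏ s, R (idx s) (jdx s)) * I jdx
      = I idx - m * T R idx := by linarith [key]
  rw [this]
  field_simp
  ring
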